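/- Let D = (E, F) be a delta-matroid and e ∈ E a non-orientable ribbon loop (i.e., e lies in no minimum-cardinality feasible set of D, and e lies in no minimum-cardinality feasible set of D^{*|e}). Then for every minimum-cardinality feasible set A of D, the set A ∪ {e} is feasible in D. -/
import Mathlib


open Finset Polynomial

variable {α : Type*} [DecidableEq α]

/-- The twist of a collection of feasible sets with respect to `A`. -/
noncomputable def SS.twist (A : Finset α) (F : Finset (Finset α)) : Finset (Finset α) :=
  F.image (fun X => symmDiff A X)

/-- Loop complementation at a single element `e`. -/
noncomputable def SS.lc (e : α) (F : Finset (Finset α)) : Finset (Finset α) :=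
  symmDiff F ((F.filter (fun X => e ∉ X)).image (insert e))

/-- The two generating operations: twist `*` and loop complementation `×`. -/
inductive SS.Op | star | cross

/-- Apply a single operation at a single element. -/
noncomputable def SS.opElem : SS.Op → α → Finset (Finset α) → Finset (Finset α)
  | .star, e, F => SS.twist {e} F
  | .cross, e, F => SS.lc e F

/-- Apply a word in `{*, ×}` at a single element. -/
noncomputable def SS.wordElem (w : List SS.Op) (e : α) (F : Finset (Finset α)) : Finset (Finset α) :=
  w.foldl (fun F o => SS.opElem o e F) F

/-- Apply a word in `{*, ×}` elementwise on a subset `A`. -/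
noncomputable def SS.wordOn (w : List SS.Op) (A : Finset α) (F : Finset (Finset α)) : Finset (Finset α) :=
  A.toList.foldl (fun F e => SS.wordElem w e F) F

/-- Size of a largest feasible set. -/
noncomputable def SS.rmax (F : Finset (Finset α)) : ℕ := F.sup Finset.card

/-- Size of a smallest feasible set. -/
noncomputable def SS.rmin (F : Finset (Finset α)) : ℕ := sInf (Finset.card '' (F : Set (Finset α)))

/-- The width of a set system. -/
noncomputable def SS.width (F : Finset (Finset α)) : ℕ := SS.rmax F - SS.rmin F

/-- The minimum-cardinality feasible sets. -/
noncomputable def SS.Fmin (F : Finset (Finset α)) : Finset (Finset α) :=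
  F.filter (fun X => X.card = SS.rmin F)

/-- The maximum-cardinality feasible sets. -/
noncomputable def SS.Fmax (F : Finset (Finset α)) : Finset (Finset α) :=
  F.filter (fun X => X.card = SS.rmax F)

/-- The partial-`w` polynomial of a set system with ground set `E`. -/
noncomputable def SS.poly (w : List SS.Op) (E : Finset α) (F : Finset (Finset α)) :
    Polynomial ℤ :=
  ∑ A ∈ E.powerset, (Polynomial.X : Polynomial ℤ) ^ SS.width (SS.wordOn w A F)

/-- A proper set system satisfying the symmetric exchange axiom. -/
noncomputable def SS.IsDeltaMatroid (F : Finset (Finset α)) : Prop :=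
  F.Nonempty ∧ ∀ X ∈ F, ∀ Y ∈ F, ∀ u ∈ symmDiff X Y,
    ∃ v ∈ symmDiff X Y, symmDiff X {u, v} ∈ F

/-- Apply a sequence of single-element twists and loop complementations. -/
noncomputable def SS.seqApply : List (SS.Op × α) → Finset (Finset α) → Finset (Finset α)
  | [], F => F
  | (o, e) :: s, F => SS.seqApply s (SS.opElem o e F)

/-- A set system is vf-safe if every sequence of single-element twists and loop
complementations yields a delta-matroid. -/
noncomputable def SS.VfSafe (F : Finset (Finset α)) : Prop :=
  ∀ s : List (SS.Op × α), SS.IsDeltaMatroid (SS.seqApply s F)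

/-- The direct sum of two set systems. -/
noncomputable def SS.dsum (F F' : Finset (Finset α)) : Finset (Finset α) :=
  (F ×ˢ F').image (fun p => p.1 ∪ p.2)

open SS


private lemma sd_single_notMem {e : α} {X : Finset α} (h : e ∉ X) :
    symmDiff ({e} : Finset α) X = insert e X := by
  ext x
  simp only [Finset.mem_symmDiff, Finset.mem_singleton, Finset.mem_insert]
  by_cases hx : x = e <;> simp_all

private lemma sd_single_mem {e : α} {X : Finset α} (h : e ∈ X) :
    symmDiff ({e} : Finset α) X = X.erase e := by
  ext x
  simp only [Finset.mem_symmDiff, Finset.mem_singleton, Finset.mem_erase]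
  by_cases hx : x = e <;> simp_all

private lemma rmin_le' {F : Finset (Finset α)} {X : Finset α} (hX : X ∈ F) :
    SS.rmin F ≤ X.card :=
  Nat.sInf_le ⟨X, by simpa using hX, rfl⟩

private lemma exists_min' {F : Finset (Finset α)} (h : F.Nonempty) :
    ∃ X ∈ F, X.card = SS.rmin F := by
  have hne : (Finset.card '' (F : Set (Finset α))).Nonempty := by
    obtain ⟨X, hX⟩ := h
    exact ⟨X.card, X, by simpa using hX, rfl⟩
  obtain ⟨X, hX, hXc⟩ := Nat.sInf_mem hne
  exact ⟨X, by simpa using hX, hXc⟩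


private lemma sd_pair {B : Finset α} {u v : α} (huB : u ∈ B) (hvB : v ∉ B) :
    symmDiff B ({u, v} : Finset α) = insert v (B.erase u) := by
  have huv : u ≠ v := fun h => hvB (h ▸ huB)
  ext x
  simp only [Finset.mem_symmDiff, Finset.mem_insert, Finset.mem_singleton, Finset.mem_erase]
  by_cases hxu : x = u <;> by_cases hxv : x = v <;> subst_vars <;> tauto

private lemma sd_progress {A B : Finset α} {u v : α} (huB : u ∈ B) (huA : u ∉ A)
    (hvA : v ∈ A) (hvB : v ∉ B) :
    symmDiff A (insert v (B.erase u)) = symmDiff A B \ {u, v} := by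
  have huv : u ≠ v := fun h => hvB (h ▸ huB)
  ext x
  simp only [Finset.mem_symmDiff, Finset.mem_sdiff, Finset.mem_insert,
    Finset.mem_singleton, Finset.mem_erase]
  by_cases hxu : x = u <;> by_cases hxv : x = v <;> subst_vars <;> tauto

theorem stmt10 (F : Finset (Finset α)) (hD : SS.IsDeltaMatroid F) (e : α)
    (h1 : ∀ A ∈ SS.Fmin F, e ∉ A)
    (h2 : ∀ A ∈ SS.Fmin (SS.twist {e} F), e ∉ A) :
    ∀ A ∈ SS.Fmin F, insert e A ∈ F := by
  obtain ⟨hne, hex⟩ := hD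
  intro A hA
  rw [SS.Fmin, Finset.mem_filter] at hA
  obtain ⟨hAF, hAc⟩ := hA
  set F' := SS.twist {e} F with hF'
  set r := SS.rmin F with hrdef
  have heA : e ∉ A := h1 A (by rw [SS.Fmin, Finset.mem_filter]; exact ⟨hAF, hAc⟩)
  have hmemF' : ∀ {X : Finset α}, X ∈ F' ↔ ∃ Y ∈ F, symmDiff ({e} : Finset α) Y = X := by
    intro X; simp [hF', SS.twist]
  -- any feasible set containing e has card ≥ r + 1
  have hbig : ∀ Y ∈ F, e ∈ Y → r + 1 ≤ Y.card := by
    intro Y hY heY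
    have h1Y := rmin_le' hY
    rcases lt_or_eq_of_le h1Y with h | h
    · omega
    · exact absurd heY (h1 Y (by rw [SS.Fmin, Finset.mem_filter]; exact ⟨hY, h.symm⟩))
  -- every set in F' has card ≥ r
  have cardF' : ∀ Z ∈ F', r ≤ Z.card := by
    intro Z hZ
    obtain ⟨Y, hY, rfl⟩ := hmemF'.mp hZ
    by_cases heY : e ∈ Y
    · rw [sd_single_mem heY, Finset.card_erase_of_mem heY]
      have := hbig Y hY heY; omega
    · rw [sd_single_notMem heY, Finset.card_insert_of_notMem heY]
      have := rmin_le' hY; omega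
  have hAe : insert e A ∈ F' := hmemF'.mpr ⟨A, hAF, sd_single_notMem heA⟩
  have hAecard : (insert e A).card = r + 1 := by
    rw [Finset.card_insert_of_notMem heA, hAc]
  -- rmin F' = r
  have hr' : SS.rmin F' = r := by
    have hle : SS.rmin F' ≤ r + 1 := by
      have := rmin_le' hAe; omega
    have hge : r ≤ SS.rmin F' := by
      obtain ⟨B, hB, hBc⟩ := exists_min' ⟨insert e A, hAe⟩
      have := cardF' B hB; omega
    rcases lt_or_eq_of_le hle with h | h
    · omega
    · exfalso
      have : insert e A ∈ SS.Fmin F' := by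
        rw [SS.Fmin, Finset.mem_filter]; exact ⟨hAe, by omega⟩
      exact h2 _ this (Finset.mem_insert_self e A)
  -- exchange in F'
  have hexch' : ∀ X ∈ F', ∀ Y ∈ F', ∀ u ∈ symmDiff X Y,
      ∃ v ∈ symmDiff X Y, symmDiff X {u, v} ∈ F' := by
    intro X hX Y hY u hu
    obtain ⟨X0, hX0, rfl⟩ := hmemF'.mp hX
    obtain ⟨Y0, hY0, rfl⟩ := hmemF'.mp hY
    have hsd : symmDiff (symmDiff ({e} : Finset α) X0) (symmDiff ({e} : Finset α) Y0)
        = symmDiff X0 Y0 := by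
      rw [symmDiff_comm ({e} : Finset α) X0, symmDiff_assoc, symmDiff_symmDiff_cancel_left]
    rw [hsd] at hu ⊢
    obtain ⟨v, hv, hXv⟩ := hex X0 hX0 Y0 hY0 u hu
    refine ⟨v, hv, ?_⟩
    rw [symmDiff_assoc]
    exact hmemF'.mpr ⟨_, hXv, rfl⟩
  -- key induction
  have key : ∀ n : ℕ, ∀ B ∈ F', B.card = r → e ∉ B → (symmDiff A B).card ≤ n → A ∈ F' := by
    intro n
    induction n with
    | zero =>
      intro B hB hBc heB hle
      have h0 : symmDiff A B = ∅ := Finset.card_eq_zero.mp (Nat.le_zero.mp hle)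
      have : A = B := by
        rwa [← Finset.bot_eq_empty, symmDiff_eq_bot] at h0
      rwa [this]
    | succ n ih =>
      intro B hB hBc heB hle
      by_cases hAB : A = B
      · rwa [hAB]
      have hBA : (B \ A).Nonempty := by
        rw [Finset.sdiff_nonempty]
        intro hsub
        exact hAB (Finset.eq_of_subset_of_card_le hsub (by omega)).symm
      obtain ⟨u, hu⟩ := hBA
      rw [Finset.mem_sdiff] at hu
      obtain ⟨huB, huA⟩ := hu
      have hune : u ≠ e := fun h => heB (h ▸ huB)
      have huXY : u ∈ symmDiff B (insert e A) := by
        rw [Finset.mem_symmDiff]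
        exact Or.inl ⟨huB, by simp [hune, huA]⟩
      obtain ⟨v, hv, hB'⟩ := hexch' B hB (insert e A) hAe u huXY
      rw [Finset.mem_symmDiff] at hv
      rcases hv with ⟨hvB, hvA⟩ | ⟨hvA, hvB⟩
      · -- v ∈ B, v ∉ insert e A : contradiction via cardinality
        exfalso
        have hsub : ({u, v} : Finset α) ⊆ B := by
          intro x hx
          rcases Finset.mem_insert.mp hx with rfl | hx
          · exact huB
          · exact (Finset.mem_singleton.mp hx) ▸ hvB
        have heq : symmDiff B ({u, v} : Finset α) = B \ {u, v} := by
          rw [symmDiff_comm, symmDiff_of_le hsub]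
        have hc := cardF' _ hB'
        rw [heq, Finset.card_sdiff_of_subset hsub] at hc
        have hpos : 0 < ({u, v} : Finset α).card :=
          Finset.card_pos.mpr ⟨u, by simp⟩
        have hcard2 : ({u, v} : Finset α).card ≤ B.card := Finset.card_le_card hsub
        omega
      · have hvnB : v ∉ B := hvB
        have huA' : u ∉ A := huA
        have hvu : v ≠ u := fun h => hvnB (h ▸ huB)
        have hB'eq : symmDiff B ({u, v} : Finset α) = insert v (B.erase u) :=
          sd_pair huB hvnB
        by_cases hve : v = e
        · -- contradiction with h2
          exfalso
          subst hve
          have hcB' : (symmDiff B ({u, v} : Finset α)).card = r := by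
            rw [hB'eq, Finset.card_insert_of_notMem (by simp [heB, hvu]),
              Finset.card_erase_of_mem huB]
            have : 1 ≤ B.card := Finset.card_pos.mpr ⟨u, huB⟩
            omega
          have hmin : symmDiff B ({u, v} : Finset α) ∈ SS.Fmin F' := by
            rw [SS.Fmin, Finset.mem_filter]
            exact ⟨hB', by rw [hcB', hr']⟩
          exact h2 _ hmin (by rw [hB'eq]; exact Finset.mem_insert_self v _)
        · -- v ∈ A : progress
          have hvA' : v ∈ A := by
            rcases Finset.mem_insert.mp hvA with h | h
            · exact absurd h hve
            · exact h
          have hcB' : (symmDiff B ({u, v} : Finset α)).card = r := by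
            rw [hB'eq, Finset.card_insert_of_notMem (by simp [hvnB, hvu]),
              Finset.card_erase_of_mem huB]
            have : 1 ≤ B.card := Finset.card_pos.mpr ⟨u, huB⟩
            omega
          have heB' : e ∉ symmDiff B ({u, v} : Finset α) := by
            rw [hB'eq]
            simp [Ne.symm hve, heB]
          have hsdeq : symmDiff A (symmDiff B ({u, v} : Finset α))
              = symmDiff A B \ {u, v} := by
            rw [hB'eq]; exact sd_progress huB huA hvA' hvnB
          have hsub : ({u, v} : Finset α) ⊆ symmDiff A B := by
            intro x hx
            rcases Finset.mem_insert.mp hx with rfl | hx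
            · rw [Finset.mem_symmDiff]; exact Or.inr ⟨huB, huA⟩
            · rw [Finset.mem_singleton.mp hx, Finset.mem_symmDiff]
              exact Or.inl ⟨hvA', hvnB⟩
          have hcard2 : ({u, v} : Finset α).card = 2 := by
            rw [Finset.card_insert_of_notMem (by simp [hvu.symm])]
            simp
          have hlt : (symmDiff A (symmDiff B ({u, v} : Finset α))).card ≤ n := by
            rw [hsdeq, Finset.card_sdiff_of_subset hsub, hcard2]
            omega
          exact ih _ hB' hcB' heB' hlt
  obtain ⟨B0, hB0, hB0c⟩ := exists_min' ⟨insert e A, hAe⟩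
  have heB0 : e ∉ B0 := h2 B0 (by rw [SS.Fmin, Finset.mem_filter]; exact ⟨hB0, hB0c⟩)
  have hAF' : A ∈ F' := key _ B0 hB0 (by omega) heB0 le_rfl
  obtain ⟨Y, hY, hYeq⟩ := hmemF'.mp hAF'
  have : Y = insert e A := by
    have := congrArg (fun Z => symmDiff ({e} : Finset α) Z) hYeq
    simp only [symmDiff_symmDiff_cancel_left] at this
    rw [this, sd_single_notMem heA]
  rwa [this] at hY
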